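/- Let A, B ⊆ ℕ. If the characteristic function of B is recursive in the characteristic function of A, then (H₀^B, H₁^B) is many-one reducible to (H₀^A, H₁^A). -/

import Mathlib

open Classical in
/-- The oracle game: the list of previous answers by Merlin up to stage `i`,
for the answer sequence `s`. -/
def prefixList (s : ℕ → ℕ) (i : ℕ) : List ℕ := List.ofFn (fun j : Fin i => s j)

/-- A winning Arthur+Nimue strategy for the reduction game of the basic oracle `ℱ`
to the basic oracle `𝒢`. -/
def Winning (ℱ 𝒢 : Set (Set ℕ)) (σ : List ℕ →. Option ℕ) (ν : Set ℕ → List ℕ → Set ℕ) : Prop :=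
  (∀ F ∈ ℱ, ∀ l : List ℕ, ν F l ∈ 𝒢) ∧
  ∀ F ∈ ℱ, ∀ s : ℕ → ℕ, (∀ i, s i ∈ ν F (prefixList s i)) →
    ∃ k, (∀ i ≤ k, (σ (prefixList s i)).Dom) ∧
      (∀ i < k, none ∈ σ (prefixList s i)) ∧
      ∃ u ∈ F, some u ∈ σ (prefixList s k)

/-- The encoding of an Arthur strategy as a partial function `ℕ →. ℕ`, via the
standard Mathlib encodings of `List ℕ` and `Option ℕ`. -/
def arthurCode (σ : List ℕ →. Option ℕ) : ℕ →. ℕ :=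
  fun n => (σ (Denumerable.ofNat (List ℕ) n)).map Encodable.encode

open Classical in
/-- The decoding oracle associated to the promise problem `(P, Q)`: value `0` on `P`,
value `1` on `Q`, undefined elsewhere. -/
noncomputable def dOracle (P Q : Set ℕ) : ℕ →. ℕ :=
  fun n => ⟨n ∈ P ∪ Q, fun _ => if n ∈ Q then 1 else 0⟩

open Classical in
/-- The characteristic function of a set of naturals. -/
noncomputable def chi (A : Set ℕ) : ℕ → ℕ := fun n => if n ∈ A then 1 else 0

/-- The coded cartesian product of two sets of naturals. -/
def tensor (P Q : Set ℕ) : Set ℕ := {x | ∃ p ∈ P, ∃ q ∈ Q, x = Nat.pair p q}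

infixl:70 " ⊗ " => tensor

/-- Oracle computability, as in Mathlib's `Nat.RecursiveIn`. -/
inductive Nat.RecursiveInO (g : ℕ →. ℕ) : (ℕ →. ℕ) → Prop
  | zero : Nat.RecursiveInO g fun _ => 0
  | succ : Nat.RecursiveInO g Nat.succ
  | left : Nat.RecursiveInO g fun n => (Nat.unpair n).1
  | right : Nat.RecursiveInO g fun n => (Nat.unpair n).2
  | oracle : Nat.RecursiveInO g g
  | pair {f h : ℕ →. ℕ} (hf : Nat.RecursiveInO g f) (hh : Nat.RecursiveInO g h) :
      Nat.RecursiveInO g fun n => (Nat.pair <$> f n <*> h n)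
  | comp {f h : ℕ →. ℕ} (hf : Nat.RecursiveInO g f) (hh : Nat.RecursiveInO g h) :
      Nat.RecursiveInO g fun n => h n >>= f
  | prec {f h : ℕ →. ℕ} (hf : Nat.RecursiveInO g f) (hh : Nat.RecursiveInO g h) :
      Nat.RecursiveInO g
        (Nat.unpaired fun a n =>
          n.rec (f a) fun y IH => do
            let i ← IH
            h (Nat.pair a (Nat.pair y i)))
  | rfind {f : ℕ →. ℕ} (hf : Nat.RecursiveInO g f) :
      Nat.RecursiveInO g fun a =>
        Nat.rfind fun n => (fun m => m = 0) <$> f (Nat.pair a n)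

/-- `f` is T1-reducible to `g`: some partial function recursive in the oracle `g`
extends `f`. -/
def T1Reducible (f g : ℕ →. ℕ) : Prop :=
  ∃ h : ℕ →. ℕ, Nat.RecursiveInO g h ∧ ∀ n : ℕ, ∀ a ∈ f n, a ∈ h n

/-- `f` is T1-computable: it has a partial computable extension. -/
def T1Computable (f : ℕ →. ℕ) : Prop :=
  ∃ h : ℕ →. ℕ, Nat.Partrec h ∧ ∀ n : ℕ, ∀ a ∈ f n, a ∈ h n

/-- Codes for oracle computations: Mathlib's `Nat.Partrec.Code` extended by an
`oracle` constructor. -/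
inductive OCode : Type
  | zero : OCode
  | succ : OCode
  | left : OCode
  | right : OCode
  | oracle : OCode
  | pair : OCode → OCode → OCode
  | comp : OCode → OCode → OCode
  | prec : OCode → OCode → OCode
  | rfind' : OCode → OCode

/-- Evaluation of an oracle code relative to the oracle `g`, by the same structural
recursion as Mathlib's `Nat.Partrec.Code.eval`. -/
def OCode.eval (g : ℕ →. ℕ) : OCode → ℕ →. ℕ
  | .zero => pure 0
  | .succ => Nat.succ
  | .left => ↑fun n : ℕ => n.unpair.1
  | .right => ↑fun n : ℕ => n.unpair.2
  | .oracle => g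
  | .pair cf cg => fun n => Nat.pair <$> cf.eval g n <*> cg.eval g n
  | .comp cf cg => fun n => cg.eval g n >>= cf.eval g
  | .prec cf cg =>
    Nat.unpaired fun a n =>
      n.rec (cf.eval g a) fun y IH => do
        let i ← IH
        cg.eval g (Nat.pair a (Nat.pair y i))
  | .rfind' cf =>
    Nat.unpaired fun a m =>
      (Nat.rfind fun n => (fun m => m = 0) <$> cf.eval g (Nat.pair a (n + m))).map (· + m)

/-- The `n`-th oracle code. -/
def OCode.ofNat : ℕ → OCode
  | 0 => .zero
  | 1 => .succ
  | 2 => .left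
  | 3 => .right
  | 4 => .oracle
  | n + 5 =>
    have h1 : (n / 4).unpair.1 < n + 5 :=
      lt_of_le_of_lt (le_trans (Nat.unpair_left_le _) (Nat.div_le_self _ _)) (by omega)
    have h2 : (n / 4).unpair.2 < n + 5 :=
      lt_of_le_of_lt (le_trans (Nat.unpair_right_le _) (Nat.div_le_self _ _)) (by omega)
    if n % 4 = 0 then .pair (OCode.ofNat (n / 4).unpair.1) (OCode.ofNat (n / 4).unpair.2)
    else if n % 4 = 1 then .comp (OCode.ofNat (n / 4).unpair.1) (OCode.ofNat (n / 4).unpair.2)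
    else if n % 4 = 2 then .prec (OCode.ofNat (n / 4).unpair.1) (OCode.ofNat (n / 4).unpair.2)
    else .rfind' (OCode.ofNat (n / 4).unpair.1)

/-- `φ_e^g`: the evaluation of the `e`-th oracle code relative to the oracle `g`. -/
def phi (g : ℕ →. ℕ) (e : ℕ) : ℕ →. ℕ := (OCode.ofNat e).eval g

/-- `H_i^A`: the set of (codes of) oracle programs which, run with the characteristic
function of `A` as oracle, halt on input `0` with output `i`. -/
def Hset (A : Set ℕ) (i : ℕ) : Set ℕ := {e : ℕ | (i : ℕ) ∈ phi (chi A) e 0}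

/-- Many-one reducibility of promise problems: `(P₂,Q₂)` is many-one reducible to
`(P₁,Q₁)` via a partial computable function defined on all of `P₂ ∪ Q₂`. -/
def PromiseMRed (P₂ Q₂ P₁ Q₁ : Set ℕ) : Prop :=
  ∃ f : ℕ →. ℕ, Nat.Partrec f ∧ (∀ n ∈ P₂ ∪ Q₂, (f n).Dom) ∧
    (∀ n ∈ P₂, ∀ a ∈ f n, a ∈ P₁) ∧ (∀ n ∈ Q₂, ∀ a ∈ f n, a ∈ Q₁)


namespace OCode

/-- Numeric encoding of oracle codes, a right inverse to `OCode.ofNat`. -/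
def toNat : OCode → ℕ
  | .zero => 0
  | .succ => 1
  | .left => 2
  | .right => 3
  | .oracle => 4
  | .pair a b => 4 * Nat.pair a.toNat b.toNat + 5
  | .comp a b => 4 * Nat.pair a.toNat b.toNat + 6
  | .prec a b => 4 * Nat.pair a.toNat b.toNat + 7
  | .rfind' a => 4 * Nat.pair a.toNat a.toNat + 8

lemma ofNat_toNat : ∀ c : OCode, OCode.ofNat c.toNat = c := by
  intro c
  induction c with
  | zero => simp [toNat, OCode.ofNat]
  | succ => simp [toNat, OCode.ofNat]
  | left => simp [toNat, OCode.ofNat]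
  | right => simp [toNat, OCode.ofNat]
  | oracle => simp [toNat, OCode.ofNat]
  | pair a b iha ihb =>
      show OCode.ofNat ((OCode.pair a b).toNat) = _
      simp only [toNat]
      rw [OCode.ofNat]
      simp [Nat.mul_mod_right, Nat.mul_div_cancel_left, iha, ihb]
  | comp a b iha ihb =>
      show OCode.ofNat ((OCode.comp a b).toNat) = _
      simp only [toNat]
      have : 4 * Nat.pair a.toNat b.toNat + 6 = (4 * Nat.pair a.toNat b.toNat + 1) + 5 := by omega
      rw [this, OCode.ofNat]
      simp [Nat.add_mul_mod_self_left, Nat.add_mul_div_left, iha, ihb, Nat.add_comm]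
  | prec a b iha ihb =>
      show OCode.ofNat ((OCode.prec a b).toNat) = _
      simp only [toNat]
      have : 4 * Nat.pair a.toNat b.toNat + 7 = (4 * Nat.pair a.toNat b.toNat + 2) + 5 := by omega
      rw [this, OCode.ofNat]
      simp [Nat.add_mul_mod_self_left, Nat.add_mul_div_left, iha, ihb, Nat.add_comm]
  | rfind' a iha =>
      show OCode.ofNat ((OCode.rfind' a).toNat) = _
      simp only [toNat]
      have : 4 * Nat.pair a.toNat a.toNat + 8 = (4 * Nat.pair a.toNat a.toNat + 3) + 5 := by omega
      rw [this, OCode.ofNat]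
      simp [Nat.add_mul_mod_self_left, Nat.add_mul_div_left, iha, Nat.add_comm]

/-- Substitute the oracle constructor by the code `c`. -/
def subst (c : OCode) : OCode → OCode
  | .zero => .zero
  | .succ => .succ
  | .left => .left
  | .right => .right
  | .oracle => c
  | .pair a b => .pair (subst c a) (subst c b)
  | .comp a b => .comp (subst c a) (subst c b)
  | .prec a b => .prec (subst c a) (subst c b)
  | .rfind' a => .rfind' (subst c a)

lemma eval_subst (g : ℕ →. ℕ) (c : OCode) : ∀ e : OCode,
    (subst c e).eval g = e.eval (c.eval g) := by
  intro e
  induction e with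
  | zero => rfl
  | succ => rfl
  | left => rfl
  | right => rfl
  | oracle => rfl
  | pair a b iha ihb => simp [subst, OCode.eval, iha, ihb]; rfl
  | comp a b iha ihb => simp [subst, OCode.eval, iha, ihb]; rfl
  | prec a b iha ihb => simp [subst, OCode.eval, iha, ihb]; rfl
  | rfind' a iha => simp [subst, OCode.eval, iha]; rfl

def id' : OCode := .pair .left .right

@[simp] lemma eval_id' (g : ℕ →. ℕ) (n : ℕ) : id'.eval g n = Part.some n := by
  simp [id', OCode.eval, Seq.seq]

lemma exists_code {g f : ℕ →. ℕ} (h : Nat.RecursiveInO g f) :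
    ∃ c : OCode, c.eval g = f := by
  induction h with
  | zero => exact ⟨.zero, rfl⟩
  | succ => exact ⟨.succ, rfl⟩
  | left => exact ⟨.left, rfl⟩
  | right => exact ⟨.right, rfl⟩
  | oracle => exact ⟨.oracle, rfl⟩
  | pair hf hh ihf ihh =>
      obtain ⟨cf, rfl⟩ := ihf; obtain ⟨ch, rfl⟩ := ihh
      exact ⟨.pair cf ch, rfl⟩
  | comp hf hh ihf ihh =>
      obtain ⟨cf, rfl⟩ := ihf; obtain ⟨ch, rfl⟩ := ihh
      exact ⟨.comp cf ch, rfl⟩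
  | prec hf hh ihf ihh =>
      obtain ⟨cf, rfl⟩ := ihf; obtain ⟨ch, rfl⟩ := ihh
      exact ⟨.prec cf ch, rfl⟩
  | rfind hf ihf =>
      obtain ⟨cf, rfl⟩ := ihf
      refine ⟨.comp (.rfind' cf) (.pair id' .zero), ?_⟩
      funext n
      simp [OCode.eval, Seq.seq, pure, PFun.pure, Part.map_id']

end OCode
namespace OCode

/-- The numeric substitution map. -/
def substNat (c : OCode) (n : ℕ) : ℕ := (OCode.subst c (OCode.ofNat n)).toNat

lemma substNat_lt4 (c : OCode) (n : ℕ) (h : n < 4) : substNat c n = n := by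
  interval_cases n <;> simp [substNat, OCode.ofNat, subst, toNat]

lemma substNat_4 (c : OCode) : substNat c 4 = c.toNat := by
  simp [substNat, OCode.ofNat, subst]

lemma substNat_add5 (c : OCode) (m : ℕ) :
    substNat c (m + 5) =
      if m % 4 = 0 then 4 * Nat.pair (substNat c (m / 4).unpair.1) (substNat c (m / 4).unpair.2) + 5
      else if m % 4 = 1 then
        4 * Nat.pair (substNat c (m / 4).unpair.1) (substNat c (m / 4).unpair.2) + 6
      else if m % 4 = 2 then
        4 * Nat.pair (substNat c (m / 4).unpair.1) (substNat c (m / 4).unpair.2) + 7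
      else 4 * Nat.pair (substNat c (m / 4).unpair.1) (substNat c (m / 4).unpair.1) + 8 := by
  have h0 : OCode.ofNat (m + 5) =
      if m % 4 = 0 then .pair (OCode.ofNat (m / 4).unpair.1) (OCode.ofNat (m / 4).unpair.2)
      else if m % 4 = 1 then .comp (OCode.ofNat (m / 4).unpair.1) (OCode.ofNat (m / 4).unpair.2)
      else if m % 4 = 2 then .prec (OCode.ofNat (m / 4).unpair.1) (OCode.ofNat (m / 4).unpair.2)
      else .rfind' (OCode.ofNat (m / 4).unpair.1) := by
    rw [OCode.ofNat]
  unfold substNat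
  rw [h0]
  split_ifs <;> simp [subst, toNat]

/-- The course-of-values step function for `substNat`. -/
def substStep (c : OCode) (l : List ℕ) : Option ℕ :=
  if l.length < 4 then some l.length
  else if l.length = 4 then some c.toNat
  else
    (l[((l.length - 5) / 4).unpair.1]?).bind fun a =>
      (l[((l.length - 5) / 4).unpair.2]?).map fun b =>
        if (l.length - 5) % 4 = 0 then 4 * Nat.pair a b + 5
        else if (l.length - 5) % 4 = 1 then 4 * Nat.pair a b + 6
        else if (l.length - 5) % 4 = 2 then 4 * Nat.pair a b + 7
        else 4 * Nat.pair a a + 8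

lemma substStep_primrec (c : OCode) : Primrec (substStep c) := by
  have hlen : Primrec (fun l : List ℕ => l.length) := Primrec.list_length
  have hm : Primrec (fun l : List ℕ => l.length - 5) :=
    Primrec.nat_sub.comp hlen (Primrec.const 5)
  have hu : Primrec (fun l : List ℕ => (l.length - 5) / 4) :=
    Primrec.nat_div.comp hm (Primrec.const 4)
  have hu1 : Primrec (fun l : List ℕ => ((l.length - 5) / 4).unpair.1) :=
    Primrec.fst.comp (Primrec.unpair.comp hu)
  have hu2 : Primrec (fun l : List ℕ => ((l.length - 5) / 4).unpair.2) :=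
    Primrec.snd.comp (Primrec.unpair.comp hu)
  have hget1 : Primrec (fun l : List ℕ => l[((l.length - 5) / 4).unpair.1]?) :=
    Primrec.list_getElem?.comp Primrec.id hu1
  have hget2 : Primrec (fun l : List ℕ => l[((l.length - 5) / 4).unpair.2]?) :=
    Primrec.list_getElem?.comp Primrec.id hu2
  -- the inner body as a function of ((l, a), b)
  have hmq : Primrec (fun q : (List ℕ × ℕ) × ℕ => (q.1.1.length - 5) % 4) :=
    Primrec.nat_mod.comp (hm.comp (Primrec.fst.comp Primrec.fst)) (Primrec.const 4)
  have ha : Primrec (fun q : (List ℕ × ℕ) × ℕ => q.1.2) := Primrec.snd.comp Primrec.fst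
  have hb : Primrec (fun q : (List ℕ × ℕ) × ℕ => q.2) := Primrec.snd
  have hpab : Primrec (fun q : (List ℕ × ℕ) × ℕ => Nat.pair q.1.2 q.2) :=
    Primrec₂.natPair.comp ha hb
  have hpaa : Primrec (fun q : (List ℕ × ℕ) × ℕ => Nat.pair q.1.2 q.1.2) :=
    Primrec₂.natPair.comp ha ha
  have harith : ∀ k : ℕ, Primrec (fun q : (List ℕ × ℕ) × ℕ => 4 * Nat.pair q.1.2 q.2 + k) :=
    fun k => Primrec.nat_add.comp (Primrec.nat_mul.comp (Primrec.const 4) hpab) (Primrec.const k)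
  have harith' : Primrec (fun q : (List ℕ × ℕ) × ℕ => 4 * Nat.pair q.1.2 q.1.2 + 8) :=
    Primrec.nat_add.comp (Primrec.nat_mul.comp (Primrec.const 4) hpaa) (Primrec.const 8)
  have hbody : Primrec (fun q : (List ℕ × ℕ) × ℕ =>
      if (q.1.1.length - 5) % 4 = 0 then 4 * Nat.pair q.1.2 q.2 + 5
      else if (q.1.1.length - 5) % 4 = 1 then 4 * Nat.pair q.1.2 q.2 + 6
      else if (q.1.1.length - 5) % 4 = 2 then 4 * Nat.pair q.1.2 q.2 + 7
      else 4 * Nat.pair q.1.2 q.1.2 + 8) := by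
    refine Primrec.ite (Primrec.eq.comp hmq (Primrec.const 0)) (harith 5) ?_
    refine Primrec.ite (Primrec.eq.comp hmq (Primrec.const 1)) (harith 6) ?_
    exact Primrec.ite (Primrec.eq.comp hmq (Primrec.const 2)) (harith 7) harith'
  have hinner : Primrec (fun p : List ℕ × ℕ =>
      (p.1[((p.1.length - 5) / 4).unpair.2]?).map fun b =>
        if (p.1.length - 5) % 4 = 0 then 4 * Nat.pair p.2 b + 5
        else if (p.1.length - 5) % 4 = 1 then 4 * Nat.pair p.2 b + 6
        else if (p.1.length - 5) % 4 = 2 then 4 * Nat.pair p.2 b + 7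
        else 4 * Nat.pair p.2 p.2 + 8) :=
    Primrec.option_map (hget2.comp Primrec.fst) hbody.to₂
  refine Primrec.ite (Primrec.nat_lt.comp hlen (Primrec.const 4)) (Primrec.option_some.comp hlen) ?_
  refine Primrec.ite (Primrec.eq.comp hlen (Primrec.const 4))
    (Primrec.const (some c.toNat)) ?_
  exact Primrec.option_bind hget1 hinner.to₂

lemma substStep_spec (c : OCode) (n : ℕ) :
    substStep c ((List.range n).map (substNat c)) = some (substNat c n) := by
  have hlen : ((List.range n).map (substNat c)).length = n := by simp
  have hget : ∀ i, i < n → ((List.range n).map (substNat c))[i]? = some (substNat c i) := by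
    intro i hi
    simp [List.getElem?_map, List.getElem?_range hi]
  rcases lt_or_ge n 4 with h4 | h4
  · simp [substStep, hlen, h4, substNat_lt4 c n h4]
  rcases eq_or_lt_of_le h4 with h4' | h5
  · simp [substStep, hlen, ← h4', substNat_4]
  · obtain ⟨m, rfl⟩ : ∃ m, n = m + 5 := ⟨n - 5, by omega⟩
    have hu1 : (m / 4).unpair.1 < m + 5 :=
      lt_of_le_of_lt (le_trans (Nat.unpair_left_le _) (Nat.div_le_self _ _)) (by omega)
    have hu2 : (m / 4).unpair.2 < m + 5 :=
      lt_of_le_of_lt (le_trans (Nat.unpair_right_le _) (Nat.div_le_self _ _)) (by omega)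
    have e1 := hget _ hu1
    have e2 := hget _ hu2
    rw [substStep, hlen]
    have hm5 : m + 5 - 5 = m := by omega
    rw [if_neg (by omega), if_neg (by omega), hm5, e1, e2]
    simp [substNat_add5]

lemma substNat_primrec (c : OCode) : Primrec (substNat c) := by
  have h2 : Primrec₂ (fun (_ : Unit) (n : ℕ) => substNat c n) := by
    apply Primrec.nat_strong_rec _ (g := fun (_ : Unit) l => substStep c l)
      (((substStep_primrec c).comp Primrec.snd).to₂)
    intro _ n
    exact substStep_spec c n
  exact h2.comp (Primrec.const ()) Primrec.id

end OCode

theorem stmt14 (A B : Set ℕ) (hred : Nat.RecursiveInO ↑(chi A) ↑(chi B)) :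
    PromiseMRed (Hset B 0) (Hset B 1) (Hset A 0) (Hset A 1) := by
  obtain ⟨c, hc⟩ := OCode.exists_code hred
  have hphi : ∀ e, phi (chi A) (OCode.substNat c e) = phi (chi B) e := by
    intro e
    show (OCode.ofNat ((OCode.subst c (OCode.ofNat e)).toNat)).eval (chi A) = _
    rw [OCode.ofNat_toNat, OCode.eval_subst, hc]
    rfl
  refine ⟨fun n => Part.some (OCode.substNat c n), ?_, fun n _ => trivial, ?_, ?_⟩
  · exact Partrec.nat_iff.1 ((OCode.substNat_primrec c).to_comp)
  · intro n hn a ha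
    rw [Part.mem_some_iff] at ha
    subst ha
    show (0 : ℕ) ∈ phi (chi A) (OCode.substNat c n) 0
    rw [hphi]
    exact hn
  · intro n hn a ha
    rw [Part.mem_some_iff] at ha
    subst ha
    show (1 : ℕ) ∈ phi (chi A) (OCode.substNat c n) 0
    rw [hphi]
    exact hn
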